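/- The number of connected hole-free configurations of n particles on the triangular lattice (up to translation) is at least 22^⌊(n−1)/3⌋. -/

import Mathlib

open Finset

/-- The six neighbor displacement vectors of the triangular lattice Γ, realized on ℤ × ℤ. -/
def triNbrs : List (ℤ × ℤ) := [(1,0), (-1,0), (0,1), (0,-1), (1,1), (-1,-1)]

/-- Translation of a lattice point by a displacement. -/
def shift (v d : ℤ × ℤ) : ℤ × ℤ := (v.1 + d.1, v.2 + d.2)

/-- Adjacency in the triangular lattice Γ. -/
def TriAdj (v w : ℤ × ℤ) : Prop := (w.1 - v.1, w.2 - v.2) ∈ triNbrs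

/-- A particle configuration: a finite set of occupied vertices of Γ. -/
abbrev Config := Finset (ℤ × ℤ)

/-- A configuration is connected if it is nonempty and any two occupied vertices are
joined by a path through occupied vertices. -/
def ConnectedConfig (σ : Config) : Prop :=
  σ.Nonempty ∧ ∀ v ∈ σ, ∀ w ∈ σ,
    Relation.ReflTransGen (fun a b => TriAdj a b ∧ a ∈ σ ∧ b ∈ σ) v w

/-- The connected component of a vertex within the set of unoccupied vertices. -/
def compComponent (σ : Config) (v : ℤ × ℤ) : Set (ℤ × ℤ) :=
  {w | Relation.ReflTransGen (fun a b => TriAdj a b ∧ a ∉ σ ∧ b ∉ σ) v w}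

/-- A hole is a finite maximal component of unoccupied vertices; σ is hole-free
exactly when every unoccupied vertex lies in an infinite component of unoccupied vertices. -/
def HoleFree (σ : Config) : Prop := ∀ v, v ∉ σ → (compComponent σ v).Infinite

/-- Number of triangles of σ: lattice faces with all three vertices occupied.
The faces of Γ are the upward faces {v, v+(1,0), v+(1,1)} and the downward faces
{v, v+(0,1), v+(1,1)}. -/
def triangles (σ : Config) : ℕ :=
  (σ.filter (fun v => shift v (1,0) ∈ σ ∧ shift v (1,1) ∈ σ)).card +
  (σ.filter (fun v => shift v (0,1) ∈ σ ∧ shift v (1,1) ∈ σ)).card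

/-- Number of edges of σ: lattice edges with both endpoints occupied. -/
def edges (σ : Config) : ℕ :=
  (σ.filter (fun v => shift v (1,0) ∈ σ)).card +
  (σ.filter (fun v => shift v (0,1) ∈ σ)).card +
  (σ.filter (fun v => shift v (1,1) ∈ σ)).card

/-- Perimeter of σ: the length of the boundary walk around σ.  For a connected
hole-free configuration, the boundary walk traverses each occupied edge once for
each of its two adjacent lattice faces that is not fully occupied (so an edge
traversed twice is counted twice).  The two faces adjacent to the edge v–v+(1,0)
have third vertices v+(1,1) and v+(0,-1); those adjacent to v–v+(0,1) have third
vertices v+(1,1) and v+(-1,0); those adjacent to v–v+(1,1) have third vertices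
v+(1,0) and v+(0,1). -/
def perim (σ : Config) : ℕ :=
  (∑ v ∈ σ.filter (fun v => shift v (1,0) ∈ σ),
    ((if shift v (1,1) ∈ σ then 0 else 1) + (if shift v (0,-1) ∈ σ then 0 else 1))) +
  (∑ v ∈ σ.filter (fun v => shift v (0,1) ∈ σ),
    ((if shift v (1,1) ∈ σ then 0 else 1) + (if shift v (-1,0) ∈ σ then 0 else 1))) +
  (∑ v ∈ σ.filter (fun v => shift v (1,1) ∈ σ),
    ((if shift v (1,0) ∈ σ then 0 else 1) + (if shift v (0,1) ∈ σ then 0 else 1)))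

/-- Lexicographic order on lattice points, used to normalize configurations up to
translation. -/
def lexLe (a b : ℤ × ℤ) : Prop := a.1 < b.1 ∨ (a.1 = b.1 ∧ a.2 ≤ b.2)

/-- A configuration is normalized if its lexicographically least vertex is the origin;
each translation equivalence class of configurations contains exactly one normalized
representative, so normalized configurations count configurations up to translation. -/
def Normalized (σ : Config) : Prop := ((0,0) : ℤ × ℤ) ∈ σ ∧ ∀ v ∈ σ, lexLe (0,0) v

/-- A function is subexponential if it is eventually dominated by every exponential. -/
def Subexp (f : ℕ → ℝ) : Prop := ∀ c : ℝ, 1 < c → ∀ᶠ k in Filter.atTop, f k ≤ c ^ k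

namespace CfgAux


/-- The 22 building blocks: lists of (offset, length) column specs. -/
def blocks : Fin 22 → List (ℤ × ℕ) :=
  ![ [(-2,3)], [(-1,3)], [(0,3)], [(1,3)],
     [(-1,2),(-1,1)], [(-1,2),(0,1)], [(-1,2),(1,1)],
     [(0,2),(-1,1)], [(0,2),(0,1)], [(0,2),(1,1)],
     [(1,2),(-1,1)], [(1,2),(0,1)], [(1,2),(1,1)],
     [(0,1),(-1,2)], [(0,1),(0,2)], [(0,1),(1,2)],
     [(1,1),(-1,2)], [(1,1),(0,2)], [(1,1),(1,2)],
     [(0,1),(0,1),(0,1)], [(0,1),(0,1),(1,1)], [(0,1),(1,1),(0,1)] ]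

lemma blocks_prefix : ∀ a b : Fin 22, blocks a <+: blocks b → a = b := by decide

lemma blocks_ne_nil : ∀ a : Fin 22, blocks a ≠ [] := by decide

lemma blocks_len_pos : ∀ (a : Fin 22), ∀ p ∈ blocks a, 1 ≤ p.2 := by decide

lemma blocks_sum : ∀ a : Fin 22, ((blocks a).map Prod.snd).sum = 3 := by decide

lemma bind_inj : ∀ w₁ w₂ : List (Fin 22), w₁.flatMap blocks = w₂.flatMap blocks → w₁ = w₂ := by
  intro w₁
  induction w₁ with
  | nil =>
    intro w₂ h
    cases w₂ with
    | nil => rfl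
    | cons b t =>
      exfalso
      simp only [List.flatMap_nil, List.flatMap_cons] at h
      have := blocks_ne_nil b
      cases hb : blocks b with
      | nil => exact this hb
      | cons x xs => rw [hb] at h; simp at h
  | cons a t ih =>
    intro w₂ h
    cases w₂ with
    | nil =>
      exfalso
      simp only [List.flatMap_nil, List.flatMap_cons] at h
      have := blocks_ne_nil a
      cases hb : blocks a with
      | nil => exact this hb
      | cons x xs => rw [hb] at h; simp at h
    | cons b t₂ =>
      simp only [List.flatMap_cons] at h
      have hab : a = b := by
        rcases le_total (blocks a).length (blocks b).length with hl | hl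
        · exact blocks_prefix a b (List.prefix_of_prefix_length_le
            ⟨t.flatMap blocks, rfl⟩ ⟨t₂.flatMap blocks, h.symm⟩ hl)
        · exact (blocks_prefix b a (List.prefix_of_prefix_length_le
            ⟨t₂.flatMap blocks, h.symm⟩ ⟨t.flatMap blocks, rfl⟩ hl)).symm
      subst hab
      have := List.append_cancel_left h
      rw [ih t₂ this]



def colSet (x a : ℤ) (ℓ : ℕ) : Finset (ℤ × ℤ) :=
  (Finset.range ℓ).image fun i : ℕ => (x, a + (i : ℤ))

lemma mem_colSet {x a : ℤ} {ℓ : ℕ} {v : ℤ × ℤ} :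
    v ∈ colSet x a ℓ ↔ v.1 = x ∧ a ≤ v.2 ∧ v.2 < a + ℓ := by
  obtain ⟨vx, vy⟩ := v
  simp only [colSet, Finset.mem_image, Finset.mem_range, Prod.mk.injEq]
  constructor
  · rintro ⟨i, hi, rfl, rfl⟩; simp; omega
  · rintro ⟨h1, h2, h3⟩
    exact ⟨(vy - a).toNat, by omega, h1.symm, by omega⟩

lemma colSet_card {x a : ℤ} {ℓ : ℕ} : (colSet x a ℓ).card = ℓ := by
  rw [colSet, Finset.card_image_of_injective _ (fun i j h => by
    simpa using h), Finset.card_range]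

lemma colSet_eq {x a₁ a₂ : ℤ} {ℓ₁ ℓ₂ : ℕ} (h1 : 1 ≤ ℓ₁) (h2 : 1 ≤ ℓ₂)
    (h : colSet x a₁ ℓ₁ = colSet x a₂ ℓ₂) : a₁ = a₂ ∧ ℓ₁ = ℓ₂ := by
  have m1 : (x, a₁) ∈ colSet x a₂ ℓ₂ := by rw [← h]; rw [mem_colSet]; simp; omega
  have m2 : (x, a₂) ∈ colSet x a₁ ℓ₁ := by rw [h]; rw [mem_colSet]; simp; omega
  rw [mem_colSet] at m1 m2
  have ha : a₁ = a₂ := by simp at m1 m2; omega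
  subst ha
  have m3 : (x, a₁ + (ℓ₁ - 1 : ℕ)) ∈ colSet x a₁ ℓ₂ := by
    rw [← h]; rw [mem_colSet]; simp; omega
  have m4 : (x, a₁ + (ℓ₂ - 1 : ℕ)) ∈ colSet x a₁ ℓ₁ := by
    rw [h]; rw [mem_colSet]; simp; omega
  rw [mem_colSet] at m3 m4
  simp at m3 m4
  exact ⟨rfl, by omega⟩

def build : ℤ → ℤ → List (ℤ × ℕ) → Finset (ℤ × ℤ)
  | _, _, [] => ∅
  | x, t, (δ, ℓ) :: R => colSet x (t + δ) ℓ ∪ build (x + 1) (t + δ + ℓ - 1) R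

lemma build_fst : ∀ (L : List (ℤ × ℕ)) (x t : ℤ) (v : ℤ × ℤ),
    v ∈ build x t L → x ≤ v.1 ∧ v.1 < x + L.length := by
  intro L
  induction L with
  | nil => intro x t v hv; simp [build] at hv
  | cons p R ih =>
    intro x t v hv
    obtain ⟨δ, ℓ⟩ := p
    simp only [build, Finset.mem_union] at hv
    rcases hv with hv | hv
    · rw [mem_colSet] at hv; simp [List.length]; omega
    · have := ih (x+1) (t + δ + ℓ - 1) v hv
      simp [List.length]; omega

lemma build_card : ∀ (L : List (ℤ × ℕ)) (x t : ℤ),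
    (build x t L).card = (L.map Prod.snd).sum := by
  intro L
  induction L with
  | nil => intro x t; simp [build]
  | cons p R ih =>
    intro x t
    obtain ⟨δ, ℓ⟩ := p
    rw [build, Finset.card_union_of_disjoint, colSet_card, ih]
    · simp
    · rw [Finset.disjoint_left]
      intro v hv hv'
      rw [mem_colSet] at hv
      have := build_fst R (x+1) _ v hv'
      omega

lemma build_filter_eq {x t : ℤ} {δ : ℤ} {ℓ : ℕ} {R : List (ℤ × ℕ)} :
    (build x t ((δ, ℓ) :: R)).filter (fun v => v.1 = x) = colSet x (t + δ) ℓ := by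
  ext v
  simp only [Finset.mem_filter, build, Finset.mem_union]
  constructor
  · rintro ⟨hv | hv, hx⟩
    · exact hv
    · exact absurd (build_fst R (x+1) _ v hv).1 (by omega)
  · intro hv
    exact ⟨Or.inl hv, (mem_colSet.mp hv).1⟩

lemma build_filter_rest {x t : ℤ} {δ : ℤ} {ℓ : ℕ} {R : List (ℤ × ℕ)} :
    (build x t ((δ, ℓ) :: R)).filter (fun v => v.1 ≠ x) = build (x+1) (t + δ + ℓ - 1) R := by
  ext v
  simp only [Finset.mem_filter, build, Finset.mem_union]
  constructor
  · rintro ⟨hv | hv, hx⟩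
    · exact absurd (mem_colSet.mp hv).1 hx
    · exact hv
  · intro hv
    have := build_fst R (x+1) _ v hv
    exact ⟨Or.inr hv, by omega⟩

lemma build_inj : ∀ (L₁ L₂ : List (ℤ × ℕ)) (x t : ℤ),
    (∀ p ∈ L₁, 1 ≤ p.2) → (∀ p ∈ L₂, 1 ≤ p.2) →
    build x t L₁ = build x t L₂ → L₁ = L₂ := by
  intro L₁
  induction L₁ with
  | nil =>
    intro L₂ x t _ h2 h
    cases L₂ with
    | nil => rfl
    | cons p R =>
      exfalso
      obtain ⟨δ, ℓ⟩ := p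
      have hm : (x, t + δ) ∈ build x t ((δ, ℓ) :: R) := by
        simp only [build, Finset.mem_union]
        left; rw [mem_colSet]
        have := h2 (δ, ℓ) (by simp)
        simp at this ⊢; omega
      rw [← h] at hm
      simp [build] at hm
  | cons p R₁ ih =>
    intro L₂ x t h1 h2 h
    cases L₂ with
    | nil =>
      exfalso
      obtain ⟨δ, ℓ⟩ := p
      have hm : (x, t + δ) ∈ build x t ((δ, ℓ) :: R₁) := by
        simp only [build, Finset.mem_union]
        left; rw [mem_colSet]
        have := h1 (δ, ℓ) (by simp)
        simp at this ⊢; omega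
      rw [h] at hm
      simp [build] at hm
    | cons q R₂ =>
      obtain ⟨δ₁, ℓ₁⟩ := p
      obtain ⟨δ₂, ℓ₂⟩ := q
      have hcol : colSet x (t + δ₁) ℓ₁ = colSet x (t + δ₂) ℓ₂ := by
        rw [← build_filter_eq (R := R₁), ← build_filter_eq (R := R₂), h]
      have hc := colSet_eq (h1 (δ₁, ℓ₁) (by simp)) (h2 (δ₂, ℓ₂) (by simp)) hcol
      have hδ : δ₁ = δ₂ := by omega
      have hℓ : ℓ₁ = ℓ₂ := hc.2
      subst hδ; subst hℓ
      have hrest : build (x+1) (t + δ₁ + ℓ₁ - 1) R₁ = build (x+1) (t + δ₁ + ℓ₁ - 1) R₂ := by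
        rw [← build_filter_rest (t := t), ← build_filter_rest (t := t), h]
      rw [ih R₂ (x+1) (t + δ₁ + ℓ₁ - 1) (fun p hp => h1 p (by simp [hp]))
        (fun p hp => h2 p (by simp [hp])) hrest]

lemma build_convex : ∀ (L : List (ℤ × ℕ)) (x t : ℤ) (v w : ℤ × ℤ) (y : ℤ),
    v ∈ build x t L → w ∈ build x t L → v.1 = w.1 → v.2 ≤ y → y ≤ w.2 →
    (v.1, y) ∈ build x t L := by
  intro L
  induction L with
  | nil => intro x t v w y hv; simp [build] at hv
  | cons p R ih =>
    intro x t v w y hv hw hx h1 h2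
    obtain ⟨δ, ℓ⟩ := p
    simp only [build, Finset.mem_union] at hv hw ⊢
    rcases hv with hv | hv <;> rcases hw with hw | hw
    · left
      rw [mem_colSet] at hv hw ⊢
      refine ⟨hv.1, by omega, by omega⟩
    · exfalso
      rw [mem_colSet] at hv
      have := build_fst R (x+1) _ w hw
      omega
    · exfalso
      rw [mem_colSet] at hw
      have := build_fst R (x+1) _ v hv
      omega
    · right; exact ih (x+1) _ v w y hv hw hx h1 h2


def Valid : ℕ → List (ℤ × ℕ) → Prop
  | _, [] => True
  | ℓp, (δ, ℓ) :: R => (1 ≤ ℓ ∧ δ ≤ 1 ∧ (2:ℤ) ≤ δ + ℓ + ℓp) ∧ Valid ℓ R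

instance validDec : ∀ (ℓ : ℕ) (L : List (ℤ × ℕ)), Decidable (Valid ℓ L)
  | _, [] => .isTrue trivial
  | ℓ, (δ, m) :: R =>
    have : Decidable (Valid m R) := validDec m R
    inferInstanceAs (Decidable ((1 ≤ m ∧ δ ≤ 1 ∧ (2:ℤ) ≤ δ + m + ℓ) ∧ Valid m R))

def lastLen : ℕ → List (ℤ × ℕ) → ℕ
  | ℓ, [] => ℓ
  | _, (_, m) :: R => lastLen m R

lemma valid_mono : ∀ (L : List (ℤ × ℕ)) (ℓ ℓ' : ℕ), ℓ ≤ ℓ' → Valid ℓ L → Valid ℓ' L := by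
  intro L
  cases L with
  | nil => intros; trivial
  | cons p R =>
    obtain ⟨δ, m⟩ := p
    intro ℓ ℓ' h hv
    exact ⟨⟨hv.1.1, hv.1.2.1, by have := hv.1.2.2; push_cast at *; omega⟩, hv.2⟩

lemma valid_append : ∀ (L₁ L₂ : List (ℤ × ℕ)) (ℓ : ℕ),
    Valid ℓ L₁ → Valid (lastLen ℓ L₁) L₂ → Valid ℓ (L₁ ++ L₂) := by
  intro L₁
  induction L₁ with
  | nil => intro L₂ ℓ _ h; exact h
  | cons p R ih =>
    obtain ⟨δ, m⟩ := p
    intro L₂ ℓ h1 h2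
    exact ⟨h1.1, ih L₂ m h1.2 h2⟩

/-- the step relation for connectivity -/
def stepR (σ : Config) (a b : ℤ × ℤ) : Prop := TriAdj a b ∧ a ∈ σ ∧ b ∈ σ

lemma triAdj_symm {v w : ℤ × ℤ} (h : TriAdj v w) : TriAdj w v := by
  simp only [TriAdj, triNbrs, List.mem_cons, List.not_mem_nil, or_false,
    Prod.mk.injEq, Prod.ext_iff] at *
  omega

lemma stepR_symm (σ : Config) : Symmetric (stepR σ) :=
  fun _ _ h => ⟨triAdj_symm h.1, h.2.2, h.2.1⟩

lemma rtg_symm {σ : Config} {v w : ℤ × ℤ} (h : Relation.ReflTransGen (stepR σ) v w) :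
    Relation.ReflTransGen (stepR σ) w v :=
  haveI : Std.Symm (stepR σ) := ⟨fun _ _ h' => stepR_symm σ h'⟩
  Std.Symm.symm _ _ h

lemma colpath_down {σ : Config} {x a : ℤ} {ℓ : ℕ} (hsub : colSet x a ℓ ⊆ σ) :
    ∀ (j : ℕ), (j : ℤ) < ℓ → Relation.ReflTransGen (stepR σ) (x, a + j) (x, a) := by
  intro j
  induction j with
  | zero => intro _; simpa using Relation.ReflTransGen.refl
  | succ j ih =>
    intro hj
    refine Relation.ReflTransGen.head ?_ (ih (by omega))
    refine ⟨?_, hsub (mem_colSet.mpr ⟨rfl, by push_cast; omega⟩),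
      hsub (mem_colSet.mpr ⟨rfl, by push_cast; omega⟩)⟩
    simp only [TriAdj, triNbrs, List.mem_cons, List.not_mem_nil, or_false,
      Prod.mk.injEq, Prod.ext_iff]
    push_cast
    omega

lemma colpath {σ : Config} {x a : ℤ} {ℓ : ℕ} (hsub : colSet x a ℓ ⊆ σ)
    {y z : ℤ} (hy : a ≤ y) (hy' : y < a + ℓ) (hz : a ≤ z) (hz' : z < a + ℓ) :
    Relation.ReflTransGen (stepR σ) (x, z) (x, y) := by
  have p1 : Relation.ReflTransGen (stepR σ) (x, z) (x, a) := by
    have := colpath_down hsub (z - a).toNat (by omega)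
    have he : a + ((z - a).toNat : ℤ) = z := by omega
    rwa [he] at this
  have p2 : Relation.ReflTransGen (stepR σ) (x, y) (x, a) := by
    have := colpath_down hsub (y - a).toNat (by omega)
    have he : a + ((y - a).toNat : ℤ) = y := by omega
    rwa [he] at this
  exact p1.trans (rtg_symm p2)

lemma build_conn (σ : Config) : ∀ (L : List (ℤ × ℕ)) (x a : ℤ) (ℓ : ℕ),
    Valid ℓ L → 1 ≤ ℓ → colSet x a ℓ ⊆ σ → build (x + 1) (a + ℓ - 1) L ⊆ σ →
    ∀ v ∈ build (x + 1) (a + ℓ - 1) L, Relation.ReflTransGen (stepR σ) v (x, a) := by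
  intro L
  induction L with
  | nil => intro x a ℓ _ _ _ _ v hv; simp [build] at hv
  | cons p R ih =>
    intro x a ℓ hval hℓ hcol hbuild v hv
    obtain ⟨δ, m⟩ := p
    obtain ⟨⟨hm, hδ, hδ'⟩, hvalR⟩ := hval
    -- notation
    have hCsub : colSet (x + 1) (a + ℓ - 1 + δ) m ⊆ σ := by
      intro u hu
      exact hbuild (by simp only [build, Finset.mem_union]; exact Or.inl hu)
    have hRsub : build (x + 1 + 1) (a + ℓ - 1 + δ + m - 1) R ⊆ σ := by
      intro u hu
      exact hbuild (by simp only [build, Finset.mem_union]; exact Or.inr hu)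
    -- subclaim: every cell of the new column connects to (x, a)
    have hC : ∀ u ∈ colSet (x + 1) (a + ℓ - 1 + δ) m,
        Relation.ReflTransGen (stepR σ) u (x, a) := by
      intro u hu
      obtain ⟨ux, uy⟩ := u
      rw [mem_colSet] at hu
      obtain ⟨hux, huy1, huy2⟩ := hu
      simp only at hux huy1 huy2
      subst hux
      set b : ℤ := a + ℓ - 1 + δ with hb
      set t : ℤ := a + ℓ - 1 with ht
      set ys : ℤ := max a b with hys
      set z : ℤ := min ys t with hz
      have hys1 : b ≤ ys := le_max_right a b
      have hys2 : ys ≤ b + m - 1 := by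
        have : a ≤ b + m - 1 := by omega
        omega
      have hza : a ≤ z := by
        have : a ≤ t := by omega
        have : a ≤ ys := le_max_left a b
        omega
      have hzt : z ≤ t := min_le_right _ _
      -- path within new column
      have p1 : Relation.ReflTransGen (stepR σ) (x + 1, uy) (x + 1, ys) :=
        colpath hCsub hys1 (by omega) huy1 (by omega)
      -- crossing step
      have hcross : stepR σ (x + 1, ys) (x, z) := by
        refine ⟨?_, hCsub (mem_colSet.mpr ⟨rfl, by simp; omega⟩),
          hcol (mem_colSet.mpr ⟨rfl, by simp; omega⟩)⟩
        simp only [TriAdj, triNbrs, List.mem_cons, List.not_mem_nil, or_false,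
          Prod.mk.injEq, Prod.ext_iff]
        have : z = ys ∨ (ys = t + 1 ∧ z = t) := by omega
        omega
      -- path within old column
      have p2 : Relation.ReflTransGen (stepR σ) (x, z) (x, a) :=
        colpath hcol le_rfl (by omega) hza (by omega)
      exact p1.trans (Relation.ReflTransGen.head hcross p2)
    simp only [build, Finset.mem_union] at hv
    rcases hv with hv | hv
    · exact hC v hv
    · have hmid := ih (x + 1) (a + ℓ - 1 + δ) m hvalR hm hCsub
        (by rw [show a + ℓ - 1 + δ + m - 1 = (a + ℓ - 1 + δ) + m - 1 by ring] at hRsub ⊢; exact hRsub)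
        v (by rw [show (a + ℓ - 1 + δ) + m - 1 = a + ℓ - 1 + δ + m - 1 by ring]; exact hv)
      have hb : Relation.ReflTransGen (stepR σ) (x + 1, a + ℓ - 1 + δ) (x, a) :=
        hC _ (mem_colSet.mpr ⟨rfl, by simp; omega⟩)
      exact hmid.trans hb


-- NEW MATERIAL BELOW

lemma blocks_valid : ∀ m : Fin 22, Valid 1 (blocks m) := by decide
lemma blocks_lastLen : ∀ m : Fin 22, 1 ≤ lastLen 0 (blocks m) := by decide

lemma lastLen_indep : ∀ (L : List (ℤ × ℕ)), L ≠ [] → ∀ ℓ ℓ' : ℕ, lastLen ℓ L = lastLen ℓ' L := by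
  intro L h ℓ ℓ'
  cases L with
  | nil => exact absurd rfl h
  | cons p R => obtain ⟨δ, m⟩ := p; rfl

lemma valid_flatMap : ∀ (w : List (Fin 22)) (ℓ : ℕ), 1 ≤ ℓ → Valid ℓ (w.flatMap blocks) := by
  intro w
  induction w with
  | nil => intro ℓ _; trivial
  | cons m t ih =>
    intro ℓ hℓ
    rw [List.flatMap_cons]
    refine valid_append _ _ _ (valid_mono _ 1 ℓ hℓ (blocks_valid m)) ?_
    refine ih _ ?_
    rw [lastLen_indep _ (blocks_ne_nil m) _ 0]
    exact blocks_lastLen m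

lemma flatMap_sum : ∀ w : List (Fin 22), ((w.flatMap blocks).map Prod.snd).sum = 3 * w.length := by
  intro w
  induction w with
  | nil => simp
  | cons m t ih =>
    rw [List.flatMap_cons, List.map_append, List.sum_append, ih, blocks_sum]
    simp [List.length_cons]; ring

lemma flatMap_len_pos : ∀ (w : List (Fin 22)), ∀ p ∈ w.flatMap blocks, 1 ≤ p.2 := by
  intro w p hp
  rw [List.mem_flatMap] at hp
  obtain ⟨m, _, hm⟩ := hp
  exact blocks_len_pos m p hm

/-- The configuration associated to a seed height r and a word w. -/
def cfg (r : ℕ) (w : List (Fin 22)) : Config :=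
  colSet 0 0 (r + 1) ∪ build 1 r (w.flatMap blocks)

lemma cfg_card (r : ℕ) (w : List (Fin 22)) : (cfg r w).card = (r + 1) + 3 * w.length := by
  rw [cfg, Finset.card_union_of_disjoint, colSet_card, build_card, flatMap_sum]
  rw [Finset.disjoint_left]
  intro v hv hv'
  rw [mem_colSet] at hv
  have := build_fst _ 1 _ v hv'
  omega

lemma cfg_normalized (r : ℕ) (w : List (Fin 22)) : Normalized (cfg r w) := by
  constructor
  · rw [cfg, Finset.mem_union]
    left; exact mem_colSet.mpr ⟨rfl, le_refl 0, by push_cast; omega⟩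
  · intro v hv
    rw [cfg, Finset.mem_union] at hv
    rcases hv with hv | hv
    · rw [mem_colSet] at hv
      right; exact ⟨hv.1.symm, hv.2.1⟩
    · left
      have := build_fst _ 1 _ v hv
      omega

lemma cfg_conn_root (r : ℕ) (w : List (Fin 22)) :
    ∀ v ∈ cfg r w, Relation.ReflTransGen (stepR (cfg r w)) v ((0:ℤ), (0:ℤ)) := by
  intro v hv
  have hseedsub : colSet 0 0 (r + 1) ⊆ cfg r w := Finset.subset_union_left
  have ht : ((0:ℤ) + ((r + 1 : ℕ) : ℤ) - 1) = (r : ℤ) := by push_cast; ring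
  have hbsub : build (0 + 1) ((0:ℤ) + ((r + 1 : ℕ) : ℤ) - 1) (w.flatMap blocks) ⊆ cfg r w := by
    rw [ht]; norm_num
    exact Finset.subset_union_right
  rw [cfg, Finset.mem_union] at hv
  rcases hv with hv | hv
  · rw [mem_colSet] at hv
    obtain ⟨vx, vy⟩ := v
    simp only at hv
    rw [hv.1]
    exact colpath hseedsub le_rfl (by push_cast; omega) hv.2.1 hv.2.2
  · have := build_conn (cfg r w) (w.flatMap blocks) 0 0 (r + 1)
      (valid_flatMap w (r + 1) (by omega)) (by omega) hseedsub hbsub v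
      (by rw [ht]; norm_num; exact hv)
    exact this

lemma cfg_connected (r : ℕ) (w : List (Fin 22)) : ConnectedConfig (cfg r w) := by
  constructor
  · exact ⟨((0:ℤ),(0:ℤ)), (cfg_normalized r w).1⟩
  · intro v hv u hu
    exact (cfg_conn_root r w v hv).trans (rtg_symm (cfg_conn_root r w u hu))

lemma cfg_convex (r : ℕ) (w : List (Fin 22)) :
    ∀ (x y₁ y₂ y : ℤ), (x, y₁) ∈ cfg r w → (x, y₂) ∈ cfg r w → y₁ ≤ y → y ≤ y₂ →
    (x, y) ∈ cfg r w := by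
  intro x y₁ y₂ y h1 h2 hy1 hy2
  rw [cfg, Finset.mem_union] at h1 h2 ⊢
  rcases h1 with h1 | h1 <;> rcases h2 with h2 | h2
  · left
    rw [mem_colSet] at h1 h2 ⊢
    simp only at h1 h2 ⊢
    omega
  · exfalso
    rw [mem_colSet] at h1
    have := build_fst _ 1 _ _ h2
    simp only at h1 this
    omega
  · exfalso
    rw [mem_colSet] at h2
    have := build_fst _ 1 _ _ h1
    simp only at h2 this
    omega
  · right
    exact build_convex _ 1 _ (x, y₁) (x, y₂) y h1 h2 rfl hy1 hy2

lemma holeFree_of_convex (σ : Config)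
    (hc : ∀ (x y₁ y₂ y : ℤ), (x, y₁) ∈ σ → (x, y₂) ∈ σ → y₁ ≤ y → y ≤ y₂ → (x, y) ∈ σ) :
    HoleFree σ := by
  intro v hv
  obtain ⟨vx, vy⟩ := v
  by_cases h : ∃ i : ℕ, (vx, vy + (i : ℤ)) ∈ σ
  · have hdown : ∀ i : ℕ, (vx, vy - (i : ℤ)) ∉ σ := by
      intro i hi
      obtain ⟨j, hj⟩ := h
      exact hv (hc vx (vy - i) (vy + j) vy hi hj (by omega) (by omega))
    have hray : ∀ i : ℕ, (vx, vy - (i : ℤ)) ∈ compComponent σ (vx, vy) := by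
      intro i
      induction i with
      | zero => simpa [compComponent] using Relation.ReflTransGen.refl
      | succ i ih =>
        refine Relation.ReflTransGen.tail ih ⟨?_, hdown i, hdown (i + 1)⟩
        simp only [TriAdj, triNbrs, List.mem_cons, List.not_mem_nil, or_false,
          Prod.mk.injEq, Prod.ext_iff]
        push_cast
        omega
    exact Set.infinite_of_injective_forall_mem
      (f := fun i : ℕ => ((vx, vy - (i : ℤ)) : ℤ × ℤ))
      (fun i j hij => by simp only [Prod.mk.injEq] at hij; omega) hray
  · push_neg at h
    have hray : ∀ i : ℕ, (vx, vy + (i : ℤ)) ∈ compComponent σ (vx, vy) := by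
      intro i
      induction i with
      | zero => simpa [compComponent] using Relation.ReflTransGen.refl
      | succ i ih =>
        refine Relation.ReflTransGen.tail ih ⟨?_, h i, h (i + 1)⟩
        simp only [TriAdj, triNbrs, List.mem_cons, List.not_mem_nil, or_false,
          Prod.mk.injEq, Prod.ext_iff]
        push_cast
        omega
    exact Set.infinite_of_injective_forall_mem
      (f := fun i : ℕ => ((vx, vy + (i : ℤ)) : ℤ × ℤ))
      (fun i j hij => by simp only [Prod.mk.injEq] at hij; omega) hray

lemma cfg_holeFree (r : ℕ) (w : List (Fin 22)) : HoleFree (cfg r w) :=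
  holeFree_of_convex _ (cfg_convex r w)

lemma cfg_inj (r : ℕ) : ∀ w₁ w₂ : List (Fin 22), cfg r w₁ = cfg r w₂ → w₁ = w₂ := by
  intro w₁ w₂ h
  have hfil : ∀ w : List (Fin 22),
      (cfg r w).filter (fun v => v.1 ≠ 0) = build 1 r (w.flatMap blocks) := by
    intro w
    ext v
    simp only [Finset.mem_filter, cfg, Finset.mem_union]
    constructor
    · rintro ⟨hv | hv, hx⟩
      · exact absurd (mem_colSet.mp hv).1 hx
      · exact hv
    · intro hv
      have := build_fst _ 1 _ v hv
      exact ⟨Or.inr hv, by omega⟩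
  have hb : build 1 r (w₁.flatMap blocks) = build 1 r (w₂.flatMap blocks) := by
    rw [← hfil, ← hfil, h]
  exact bind_inj _ _ (build_inj _ _ 1 r (flatMap_len_pos w₁) (flatMap_len_pos w₂) hb)


-- NEW MATERIAL

lemma adj_bounds {a b : ℤ × ℤ} (h : TriAdj a b) :
    b.1 - a.1 ≤ 1 ∧ a.1 - b.1 ≤ 1 ∧ b.2 - a.2 ≤ 1 ∧ a.2 - b.2 ≤ 1 := by
  simp only [TriAdj, triNbrs, List.mem_cons, List.not_mem_nil, or_false,
    Prod.mk.injEq, Prod.ext_iff] at h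
  omega

lemma ivt_fst {σ : Config} {v w : ℤ × ℤ} (hv : v ∈ σ)
    (h : Relation.ReflTransGen (stepR σ) v w) :
    ∀ m : ℤ, ((v.1 ≤ m ∧ m ≤ w.1) ∨ (w.1 ≤ m ∧ m ≤ v.1)) → ∃ u ∈ σ, u.1 = m := by
  induction h with
  | refl => intro m hm; exact ⟨v, hv, by omega⟩
  | tail _ hstep ih =>
    rename_i u w' _
    intro m hm
    have hb := adj_bounds hstep.1
    by_cases hmw : m = w'.1
    · exact ⟨w', hstep.2.2, hmw.symm⟩
    · exact ih m (by omega)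

lemma ivt_snd {σ : Config} {v w : ℤ × ℤ} (hv : v ∈ σ)
    (h : Relation.ReflTransGen (stepR σ) v w) :
    ∀ m : ℤ, ((v.2 ≤ m ∧ m ≤ w.2) ∨ (w.2 ≤ m ∧ m ≤ v.2)) → ∃ u ∈ σ, u.2 = m := by
  induction h with
  | refl => intro m hm; exact ⟨v, hv, by omega⟩
  | tail _ hstep ih =>
    rename_i u w' _
    intro m hm
    have hb := adj_bounds hstep.1
    by_cases hmw : m = w'.2
    · exact ⟨w', hstep.2.2, hmw.symm⟩
    · exact ih m (by omega)

lemma coord_bound {σ : Config} {n : ℕ} (hcard : σ.card = n)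
    (hconn : ConnectedConfig σ) (h0 : ((0,0) : ℤ × ℤ) ∈ σ) :
    ∀ v ∈ σ, v.1.natAbs < n ∧ v.2.natAbs < n := by
  intro v hv
  have hpath : Relation.ReflTransGen (stepR σ) ((0,0) : ℤ × ℤ) v := hconn.2 _ h0 _ hv
  constructor
  · -- fst
    have hsub : Finset.Icc (min 0 v.1) (max 0 v.1) ⊆ σ.image Prod.fst := by
      intro m hm
      rw [Finset.mem_Icc] at hm
      obtain ⟨u, hu, hu'⟩ := ivt_fst h0 hpath m (by simp at hm ⊢; omega)
      exact Finset.mem_image.mpr ⟨u, hu, hu'⟩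
    have hc := Finset.card_le_card hsub
    have hc2 : (σ.image Prod.fst).card ≤ n := hcard ▸ Finset.card_image_le
    rw [Int.card_Icc] at hc
    omega
  · have hsub : Finset.Icc (min 0 v.2) (max 0 v.2) ⊆ σ.image Prod.snd := by
      intro m hm
      rw [Finset.mem_Icc] at hm
      obtain ⟨u, hu, hu'⟩ := ivt_snd h0 hpath m (by simp at hm ⊢; omega)
      exact Finset.mem_image.mpr ⟨u, hu, hu'⟩
    have hc := Finset.card_le_card hsub
    have hc2 : (σ.image Prod.snd).card ≤ n := hcard ▸ Finset.card_image_le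
    rw [Int.card_Icc] at hc
    omega

theorem main_bound (n : ℕ) (hn : 1 ≤ n) :
    22 ^ ((n - 1) / 3) ≤
      {σ : Config | σ.card = n ∧ ConnectedConfig σ ∧ HoleFree σ ∧ Normalized σ}.ncard := by
  set S := {σ : Config | σ.card = n ∧ ConnectedConfig σ ∧ HoleFree σ ∧ Normalized σ} with hS
  set k := (n - 1) / 3 with hk
  set r := (n - 1) % 3 with hr
  have hnk : n = (r + 1) + 3 * k := by
    have := Nat.div_add_mod (n - 1) 3
    omega
  -- the injection
  set F : (Fin k → Fin 22) → Config := fun f => cfg r (List.ofFn f) with hF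
  have hFinj : Function.Injective F := by
    intro f g h
    exact List.ofFn_inj.mp (cfg_inj r _ _ h)
  have hFmem : ∀ f, F f ∈ S := by
    intro f
    refine ⟨?_, cfg_connected r _, cfg_holeFree r _, cfg_normalized r _⟩
    rw [cfg_card, List.length_ofFn]
    omega
  -- finiteness
  have hSfin : S.Finite := by
    set B : Finset (ℤ × ℤ) := Finset.Icc (-(n:ℤ), -(n:ℤ)) ((n:ℤ), (n:ℤ)) with hB
    have hsub : S ⊆ {σ : Config | σ ∈ B.powerset} := by
      intro σ hσ
      obtain ⟨hcard, hconn, _, hnorm⟩ := hσ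
      simp only [Set.mem_setOf_eq, Finset.mem_powerset]
      intro v hv
      have := coord_bound hcard hconn hnorm.1 v hv
      rw [hB, Finset.mem_Icc]
      obtain ⟨vx, vy⟩ := v
      simp only at this
      constructor <;> rw [Prod.mk_le_mk] <;> constructor <;> omega
    exact Set.Finite.subset (B.powerset.finite_toSet) hsub
  calc 22 ^ k = Nat.card (Fin k → Fin 22) := by
        simp [Nat.card_eq_fintype_card]
    _ = (Set.range F).ncard := by
        rw [← Nat.card_range_of_injective hFinj, Nat.card_coe_set_eq]
    _ ≤ S.ncard := Set.ncard_le_ncard (Set.range_subset_iff.mpr hFmem) hSfin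


end CfgAux

/-- the number of connected hole-free configurations of n particles,
counted up to translation (i.e., normalized), is at least 22^⌊(n−1)/3⌋. -/
theorem count_configs_lower_bound (n : ℕ) (hn : 1 ≤ n) :
    22 ^ ((n - 1) / 3) ≤
      {σ : Config | σ.card = n ∧ ConnectedConfig σ ∧ HoleFree σ ∧ Normalized σ}.ncard := by
  exact CfgAux.main_bound n hn
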